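/- Let R be the ring of 2×2 matrices over the field of three elements and G = R × R with operation (u,f)·(v,g) = (u+v, f+g+uv³). Then (G,·) is a loop which is a σ-generalized right Bol loop with σ: (u,f) ↦ (u,f)² = (2u, 2f+u⁴), but is not a right Bol loop. -/
import Mathlib


/-- A loop: a quasigroup with two-sided identity. -/
class MyLoop (L : Type*) extends Mul L, One L where
  one_mul : ∀ a : L, 1 * a = a
  mul_one : ∀ a : L, a * 1 = a
  ldiv : L → L → L
  rdiv : L → L → L
  mul_ldiv : ∀ a b : L, a * ldiv a b = b
  ldiv_mul : ∀ a b : L, ldiv a (a * b) = b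
  rdiv_mul : ∀ a b : L, rdiv a b * b = a
  mul_rdiv : ∀ a b : L, rdiv (a * b) b = a

namespace MyLoop

variable {L : Type*} [MyLoop L]

/-- right inverse: `x * rho x = 1` -/
def rho (x : L) : L := ldiv x 1

/-- left inverse: `lam x * x = 1` -/
def lam (x : L) : L := rdiv 1 x

/-- right translation `R_a : y ↦ y * a`, as a bijection -/
def Rt (a : L) : Equiv.Perm L :=
  ⟨fun y => y * a, fun y => rdiv y a, fun y => mul_rdiv y a, fun y => rdiv_mul y a⟩

/-- left translation `L_a : y ↦ a * y`, as a bijection -/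
def Lt (a : L) : Equiv.Perm L :=
  ⟨fun y => a * y, fun y => ldiv a y, fun y => ldiv_mul a y, fun y => mul_ldiv a y⟩

/-- σ-generalized (right) Bol loop identity -/
def GBol (σ : L → L) : Prop := ∀ x y z : L, ((x * y) * z) * σ y = x * ((y * z) * σ y)

/-- σ-generalized left Bol loop identity -/
def LBol (σ : L → L) : Prop := ∀ x y z : L, σ y * (z * (y * x)) = (σ y * (z * y)) * x

/-- σ-M-loop identity -/
def MLoopP (σ : L → L) : Prop := ∀ x y z : L, (x * y) * (z * σ x) = (x * (y * z)) * σ x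

/-- right inverse property -/
def RIP (L : Type*) [MyLoop L] : Prop := ∀ x y : L, (y * x) * rho x = y

/-- left inverse property -/
def LIP (L : Type*) [MyLoop L] : Prop := ∀ x y : L, lam x * (x * y) = y

/-- right nucleus -/
def Nrho (L : Type*) [MyLoop L] : Set L := {a | ∀ y z : L, (z * y) * a = z * (y * a)}

/-- middle nucleus -/
def Nmu (L : Type*) [MyLoop L] : Set L := {a | ∀ y z : L, (z * a) * y = z * (a * y)}

/-- multiplication of the A-holomorph `H = A × L`, `(α,x)∘(β,y) = (αβ, xβ · y)` -/
def hmul (A : Subgroup (MulAut L)) (p q : ↥A × L) : ↥A × L :=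
  (p.1 * q.1, (q.1 : MulAut L) p.2 * q.2)

/-- the right inverse of an element of the holomorph -/
def hrho (A : Subgroup (MulAut L)) (p : ↥A × L) : ↥A × L :=
  (p.1⁻¹, rho ((p.1⁻¹ : MulAut L) p.2))

/-- the holomorph is a σ'-generalized Bol loop, where `σ'(α,x) = (α, σ x)` -/
def HGBol (A : Subgroup (MulAut L)) (σ : L → L) : Prop :=
  ∀ p q r : ↥A × L,
    hmul A (hmul A (hmul A p q) r) (q.1, σ q.2) =
      hmul A p (hmul A (hmul A q r) (q.1, σ q.2))

end MyLoop

open MyLoop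

/-- 2×2 matrices over the field of three elements -/
abbrev M3 := Matrix (Fin 2) (Fin 2) (ZMod 3)

/-- the operation `(u,f)·(v,g) = (u+v, f+g+u v³)` on `G = R × R` -/
def gmul (p q : M3 × M3) : M3 × M3 := (p.1 + q.1, p.2 + q.2 + p.1 * q.1 ^ 3)

/-- `(G,·)` is a loop (with identity `(0,0)`), squaring is
`(u,f) ↦ (2u, 2f+u⁴)`, `G` is a σ-generalized right Bol loop for σ = squaring,
but `G` is not a right Bol loop. -/
lemma aux_three (a : M3) : a + a + a = 0 := by
  have h : (3:M3) = 0 := by decide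
  calc a + a + a = (3:M3) * a := by
        rw [show (3:M3) = 1+1+1 by norm_num, add_mul, add_mul, one_mul]
    _ = 0 := by rw [h, zero_mul]

lemma aux_cube2 (v : M3) : (v+v)^3 = v^3 + v^3 := by
  have c : Commute (2:M3) v := by
    have := Nat.cast_commute 2 v
    simpa using this
  rw [show v + v = (2:M3) * v from (two_mul v).symm, c.mul_pow,
    show ((2:M3)^3) = 2 by decide, two_mul]

theorem example_gbl_not_bol :
    (∀ a : M3 × M3, gmul (0, 0) a = a) ∧
    (∀ a : M3 × M3, gmul a (0, 0) = a) ∧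
    (∀ a b : M3 × M3, (∃! x, gmul a x = b) ∧ (∃! y, gmul y a = b)) ∧
    (∀ u f : M3, gmul (u, f) (u, f) = (2 * u, 2 * f + u ^ 4)) ∧
    (∀ x y z : M3 × M3,
      gmul (gmul (gmul x y) z) (gmul y y) = gmul x (gmul (gmul y z) (gmul y y))) ∧
    ¬ (∀ x y z : M3 × M3, gmul (gmul (gmul x y) z) y = gmul x (gmul (gmul y z) y)) := by

  refine ⟨?_, ?_, ?_, ?_, ?_, ?_⟩
  · intro a; simp [gmul]
  · intro a; simp [gmul]
  · rintro ⟨a1, a2⟩ ⟨b1, b2⟩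
    constructor
    · refine ⟨(b1 - a1, b2 - a2 - a1 * (b1 - a1)^3), ?_, ?_⟩
      · simp only [gmul, Prod.ext_iff]
        constructor <;> abel
      · rintro ⟨x1, x2⟩ hx
        simp only [gmul, Prod.mk.injEq] at hx ⊢
        obtain ⟨h1, h2⟩ := hx
        have e1 : x1 = b1 - a1 := by rw [← h1]; abel
        subst e1
        exact ⟨rfl, by rw [← h2]; abel⟩
    · refine ⟨(b1 - a1, b2 - a2 - (b1 - a1) * a1^3), ?_, ?_⟩
      · simp only [gmul, Prod.ext_iff]
        constructor <;> abel
      · rintro ⟨y1, y2⟩ hy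
        simp only [gmul, Prod.mk.injEq] at hy ⊢
        obtain ⟨h1, h2⟩ := hy
        have e1 : y1 = b1 - a1 := by rw [← h1]; abel
        subst e1
        exact ⟨rfl, by rw [← h2]; abel⟩
  · intro u f
    simp only [gmul, Prod.mk.injEq]
    exact ⟨(two_mul u).symm, by rw [two_mul, show u^4 = u * u^3 from pow_succ' u 3]⟩
  · rintro ⟨u, f⟩ ⟨v, g⟩ ⟨w, h⟩
    simp only [gmul, Prod.mk.injEq]
    constructor
    · abel
    · rw [show v + w + (v + v) = w from by
        rw [show v + w + (v + v) = w + (v + v + v) from by abel, aux_three v, add_zero]]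
      rw [aux_cube2]
      simp only [add_mul, mul_add]
      rw [← sub_eq_zero, ← aux_three (u * v^3)]
      abel
  · intro hb
    have := hb (1, 0) (!![0,1;0,0], 0) (!![0,0;1,0], 0)
    simp only [gmul, Prod.mk.injEq] at this
    exact absurd this (by decide)
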